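/- For every m ≥ 4, the number of codewords of RC_m whose left-most bit c_{m−1} equals 0 is exactly N(m−3) + N(m−4). -/

import Mathlib

/-- The RR constraint: no index `i` with `i + 2 ≤ m - 1` such that `c i = 0` and `c (i+2) = 0`
(bit `false` plays the role of `0`, bit `true` the role of `1`). -/
def RRok (m : ℕ) (c : Fin m → Bool) : Prop :=
  ∀ i j : Fin m, (j : ℕ) = (i : ℕ) + 2 → ¬(c i = false ∧ c j = false)

instance (m : ℕ) : DecidablePred (RRok m) := fun c => by
  unfold RRok; infer_instance

/-- The LOCO code `RC_m`: all binary words of length `m` satisfying the RR constraint. -/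
def RC (m : ℕ) : Finset (Fin m → Bool) := Finset.univ.filter (RRok m)

/-- `N m = |RC_m|`. -/
def N (m : ℕ) : ℕ := (RC m).card

section aux

variable (m : ℕ)

/-- restriction to first k bits -/
def restr (k : ℕ) (hk : k ≤ m) (c : Fin m → Bool) : Fin k → Bool :=
  fun i => c ⟨i, lt_of_lt_of_le i.isLt hk⟩

/-- extend a word of length m-3 by 1,1,0 -/
def ext1 (hm : 4 ≤ m) (d : Fin (m - 3) → Bool) : Fin m → Bool :=
  fun i => if h : (i : ℕ) < m - 3 then d ⟨i, h⟩ else decide ((i : ℕ) ≠ m - 1)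

/-- extend a word of length m-4 by 1,1,0,0 -/
def ext2 (hm : 4 ≤ m) (d : Fin (m - 4) → Bool) : Fin m → Bool :=
  fun i => if h : (i : ℕ) < m - 4 then d ⟨i, h⟩ else decide ((i : ℕ) < m - 2)

lemma restr_ok (k : ℕ) (hk : k ≤ m) (c : Fin m → Bool) (hc : RRok m c) :
    RRok k (restr m k hk c) := by
  intro i j hij h
  exact hc ⟨i, lt_of_lt_of_le i.isLt hk⟩ ⟨j, lt_of_lt_of_le j.isLt hk⟩ hij h

lemma forced_m3 (hm : 4 ≤ m) (c : Fin m → Bool) (hc : RRok m c)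
    (h1 : c ⟨m - 1, Nat.sub_lt (by omega) Nat.one_pos⟩ = false) : c ⟨m - 3, by omega⟩ = true := by
  have := hc ⟨m - 3, by omega⟩ ⟨m - 1, Nat.sub_lt (by omega) Nat.one_pos⟩ (by simp; omega)
  cases hv : c ⟨m - 3, by omega⟩ with
  | false => exact absurd ⟨hv, h1⟩ this
  | true => rfl

lemma forced_m4 (hm : 4 ≤ m) (c : Fin m → Bool) (hc : RRok m c)
    (h2 : c ⟨m - 2, by omega⟩ = false) : c ⟨m - 4, by omega⟩ = true := by
  have := hc ⟨m - 4, by omega⟩ ⟨m - 2, by omega⟩ (by simp; omega)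
  cases hv : c ⟨m - 4, by omega⟩ with
  | false => exact absurd ⟨hv, h2⟩ this
  | true => rfl

lemma ext1_ok (hm : 4 ≤ m) (d : Fin (m - 3) → Bool) (hd : RRok (m - 3) d) :
    RRok m (ext1 m hm d) := by
  intro i j hij h
  obtain ⟨h1, h2⟩ := h
  unfold ext1 at h1 h2
  by_cases hj : (j : ℕ) < m - 3
  · have hi : (i : ℕ) < m - 3 := by omega
    rw [dif_pos hi] at h1; rw [dif_pos hj] at h2
    exact hd ⟨i, hi⟩ ⟨j, hj⟩ (by simpa using hij) ⟨h1, h2⟩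
  · rw [dif_neg hj] at h2
    by_cases hj1 : (j : ℕ) = m - 1
    · -- then i = m - 3
      have hi : ¬ (i : ℕ) < m - 3 := by omega
      rw [dif_neg hi] at h1
      have : (i : ℕ) ≠ m - 1 := by omega
      simp [this] at h1
    · simp [hj1] at h2

lemma ext2_ok (hm : 4 ≤ m) (d : Fin (m - 4) → Bool) (hd : RRok (m - 4) d) :
    RRok m (ext2 m hm d) := by
  intro i j hij h
  obtain ⟨h1, h2⟩ := h
  unfold ext2 at h1 h2
  by_cases hj : (j : ℕ) < m - 4
  · have hi : (i : ℕ) < m - 4 := by omega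
    rw [dif_pos hi] at h1; rw [dif_pos hj] at h2
    exact hd ⟨i, hi⟩ ⟨j, hj⟩ (by simpa using hij) ⟨h1, h2⟩
  · rw [dif_neg hj] at h2
    by_cases hj1 : (j : ℕ) < m - 2
    · simp [hj1] at h2
    · -- j = m-2 or m-1, so i = m-4 or m-3, both give c i = true
      have hi : ¬ (i : ℕ) < m - 4 := by omega
      rw [dif_neg hi] at h1
      have : (i : ℕ) < m - 2 := by have := j.isLt; omega
      simp [this] at h1

end aux


section aux2
variable (m : ℕ)

lemma ext1_m1 (hm : 4 ≤ m) (d : Fin (m - 3) → Bool) :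
    ext1 m hm d ⟨m - 1, Nat.sub_lt (by omega) Nat.one_pos⟩ = false := by
  simp only [ext1, Fin.val_mk]
  rw [dif_neg (by omega)]
  simp

lemma ext1_m2 (hm : 4 ≤ m) (d : Fin (m - 3) → Bool) :
    ext1 m hm d ⟨m - 2, by omega⟩ = true := by
  simp only [ext1, Fin.val_mk]
  rw [dif_neg (by omega)]
  simp
  omega

lemma ext2_m1 (hm : 4 ≤ m) (d : Fin (m - 4) → Bool) :
    ext2 m hm d ⟨m - 1, Nat.sub_lt (by omega) Nat.one_pos⟩ = false := by
  simp only [ext2, Fin.val_mk]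
  rw [dif_neg (by omega)]
  simp
  omega

lemma ext2_m2 (hm : 4 ≤ m) (d : Fin (m - 4) → Bool) :
    ext2 m hm d ⟨m - 2, by omega⟩ = false := by
  simp only [ext2, Fin.val_mk]
  rw [dif_neg (by omega)]
  simp

lemma restr_ext1 (hm : 4 ≤ m) (d : Fin (m - 3) → Bool) :
    restr m (m - 3) h3m (ext1 m hm d) = d := by
  funext i
  simp only [restr, ext1, Fin.val_mk]
  rw [dif_pos i.isLt]

lemma restr_ext2 (hm : 4 ≤ m) (d : Fin (m - 4) → Bool) :
    restr m (m - 4) h4m (ext2 m hm d) = d := by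
  funext i
  simp only [restr, ext2, Fin.val_mk]
  rw [dif_pos i.isLt]

lemma ext1_restr (hm : 4 ≤ m) (c : Fin m → Bool) (hrr : RRok m c)
    (h1 : c ⟨m - 1, Nat.sub_lt (by omega) Nat.one_pos⟩ = false) (h2 : c ⟨m - 2, by omega⟩ = true) :
    ext1 m hm (restr m (m - 3) h3m c) = c := by
  funext i
  simp only [ext1, restr]
  by_cases h : (i : ℕ) < m - 3
  · rw [dif_pos h]
  · rw [dif_neg h]
    have hi := i.isLt
    have h3 := forced_m3 m hm c hrr h1
    rcases (by omega : (i : ℕ) = m - 3 ∨ (i : ℕ) = m - 2 ∨ (i : ℕ) = m - 1) with hv | hv | hv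
    · have hie : i = ⟨m - 3, by omega⟩ := Fin.ext hv
      rw [hie, h3]
      simp
      omega
    · have hie : i = ⟨m - 2, by omega⟩ := Fin.ext hv
      rw [hie, h2]
      simp
      omega
    · have hie : i = ⟨m - 1, Nat.sub_lt (by omega) Nat.one_pos⟩ := Fin.ext hv
      rw [hie, h1]
      simp

lemma ext2_restr (hm : 4 ≤ m) (c : Fin m → Bool) (hrr : RRok m c)
    (h1 : c ⟨m - 1, Nat.sub_lt (by omega) Nat.one_pos⟩ = false) (h2 : c ⟨m - 2, by omega⟩ = false) :
    ext2 m hm (restr m (m - 4) h4m c) = c := by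
  funext i
  simp only [ext2, restr]
  by_cases h : (i : ℕ) < m - 4
  · rw [dif_pos h]
  · rw [dif_neg h]
    have hi := i.isLt
    have h3 := forced_m3 m hm c hrr h1
    have h4 := forced_m4 m hm c hrr h2
    rcases (by omega : (i : ℕ) = m - 4 ∨ (i : ℕ) = m - 3 ∨ (i : ℕ) = m - 2 ∨ (i : ℕ) = m - 1)
      with hv | hv | hv | hv
    · have hie : i = ⟨m - 4, by omega⟩ := Fin.ext hv
      rw [hie, h4]
      simp
      omega
    · have hie : i = ⟨m - 3, by omega⟩ := Fin.ext hv
      rw [hie, h3]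
      simp
      omega
    · have hie : i = ⟨m - 2, by omega⟩ := Fin.ext hv
      rw [hie, h2]
      simp
    · have hie : i = ⟨m - 1, Nat.sub_lt (by omega) Nat.one_pos⟩ := Fin.ext hv
      rw [hie, h1]
      simp
      omega

end aux2

/-- For `m ≥ 4`, the number of codewords of `RC_m` whose left-most bit `c (m-1)` equals `0`
is exactly `N (m-3) + N (m-4)`. -/
theorem stmt5 (m : ℕ) (hm : 4 ≤ m) :
    ((RC m).filter (fun c => c ⟨m - 1, by omega⟩ = false)).card = N (m - 3) + N (m - 4) := by
  classical
  have hlt1 : m - 1 < m := by omega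
  have hlt2 : m - 2 < m := by omega
  have h3m : m - 3 ≤ m := by omega
  have h4m : m - 4 ≤ m := by omega
  set S := (RC m).filter (fun c => c ⟨m - 1, by omega⟩ = false) with hS
  have hsplit : (S.filter (fun c => c ⟨m - 2, hlt2⟩ = true)).card
      + (S.filter (fun c => ¬ c ⟨m - 2, hlt2⟩ = true)).card = S.card :=
    Finset.card_filter_add_card_filter_not _
  have hmem : ∀ c, c ∈ S ↔ RRok m c ∧ c ⟨m - 1, hlt1⟩ = false := by
    intro c
    rw [hS, Finset.mem_filter]
    simp [RC, Finset.mem_filter]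
  have h1 : (S.filter (fun c => c ⟨m - 2, hlt2⟩ = true)).card = N (m - 3) := by
    apply Finset.card_nbij' (restr m (m - 3) h3m) (ext1 m hm)
    · intro c hc
      rw [Finset.mem_coe, Finset.mem_filter] at hc
      obtain ⟨hcS, _⟩ := hc
      rw [hmem] at hcS
      simp only [RC, Finset.mem_coe, Finset.mem_filter, Finset.mem_univ, true_and]
      exact restr_ok m (m - 3) h3m c hcS.1
    · intro d hd
      simp only [RC, Finset.mem_coe, Finset.mem_filter, Finset.mem_univ, true_and] at hd
      rw [Finset.mem_coe, Finset.mem_filter, hmem]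
      exact ⟨⟨ext1_ok m hm d hd, ext1_m1 m hm d⟩, ext1_m2 m hm d⟩
    · intro c hc
      rw [Finset.mem_coe, Finset.mem_filter] at hc
      obtain ⟨hcS, hc2⟩ := hc
      rw [hmem] at hcS
      exact ext1_restr m hm c hcS.1 hcS.2 hc2
    · intro d _
      exact restr_ext1 m hm d
  have h2 : (S.filter (fun c => ¬ c ⟨m - 2, hlt2⟩ = true)).card = N (m - 4) := by
    apply Finset.card_nbij' (restr m (m - 4) h4m) (ext2 m hm)
    · intro c hc
      rw [Finset.mem_coe, Finset.mem_filter] at hc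
      obtain ⟨hcS, _⟩ := hc
      rw [hmem] at hcS
      simp only [RC, Finset.mem_coe, Finset.mem_filter, Finset.mem_univ, true_and]
      exact restr_ok m (m - 4) h4m c hcS.1
    · intro d hd
      simp only [RC, Finset.mem_coe, Finset.mem_filter, Finset.mem_univ, true_and] at hd
      rw [Finset.mem_coe, Finset.mem_filter, hmem]
      refine ⟨⟨ext2_ok m hm d hd, ext2_m1 m hm d⟩, ?_⟩
      rw [ext2_m2 m hm d]
      simp
    · intro c hc
      rw [Finset.mem_coe, Finset.mem_filter] at hc
      obtain ⟨hcS, hc2⟩ := hc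
      rw [hmem] at hcS
      have hc2' : c ⟨m - 2, hlt2⟩ = false := by
        cases hv : c ⟨m - 2, hlt2⟩ with
        | false => rfl
        | true => exact absurd hv hc2
      exact ext2_restr m hm c hcS.1 hcS.2 hc2'
    · intro d _
      exact restr_ext2 m hm d
  rw [← hsplit, h1, h2]
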